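/- Let Σ be a p×p real symmetric positive definite matrix, let {u_i}_{i=1}^p be an orthonormal basis of ℝ^p, set φ_i = (u_iᵀ Σ⁻¹ u_i)⁻¹ and Σ̃ = Σ_{i=1}^p φ_i u_i u_iᵀ. Then tr[(Σ̃ − Σ)² Σ⁻¹] = tr(Σ) − Σ_{i=1}^p φ_i. -/

import Mathlib

open Matrix

lemma aux_trace_vmv_mul {p : ℕ} (a b : Fin p → ℝ) (M : Matrix (Fin p) (Fin p) ℝ) :
    Matrix.trace (vecMulVec a b * M) = b ⬝ᵥ (M *ᵥ a) := by
  simp only [Matrix.trace, Matrix.diag, Matrix.mul_apply, vecMulVec_apply, dotProduct,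
    Matrix.mulVec, Finset.mul_sum]
  rw [Finset.sum_comm]
  apply Finset.sum_congr rfl
  intro k _
  apply Finset.sum_congr rfl
  intro i _
  ring

lemma aux_vmv_mul_vmv {p : ℕ} (a b c d : Fin p → ℝ) :
    vecMulVec a b * vecMulVec c d = (b ⬝ᵥ c) • vecMulVec a d := by
  ext i j
  simp only [Matrix.mul_apply, vecMulVec_apply, Matrix.smul_apply, dotProduct, smul_eq_mul,
    Finset.sum_mul, Finset.mul_sum]
  apply Finset.sum_congr rfl
  intro k _
  ring

/-- Weighted-Frobenius-loss decomposition for the invariant estimator with shrinkers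
`φᵢ = (uᵢᵀ Σ⁻¹ uᵢ)⁻¹`:  `tr[(Σ̃ - Σ)² Σ⁻¹] = tr Σ - ∑ φᵢ`. -/
theorem statement3 (p : ℕ) (S : Matrix (Fin p) (Fin p) ℝ) (hS : S.PosDef)
    (u : Fin p → Fin p → ℝ)
    (hu : ∀ i j, u i ⬝ᵥ u j = if i = j then (1 : ℝ) else 0)
    (φ : Fin p → ℝ) (hφ : ∀ i, φ i = (u i ⬝ᵥ S⁻¹ *ᵥ u i)⁻¹)
    (T : Matrix (Fin p) (Fin p) ℝ) (hT : T = ∑ i, φ i • vecMulVec (u i) (u i)) :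
    Matrix.trace ((T - S) * (T - S) * S⁻¹) = Matrix.trace S - ∑ i, φ i := by
  have hdet : IsUnit S.det := isUnit_iff_ne_zero.2 hS.det_pos.ne'
  have hSinv : S * S⁻¹ = 1 := Matrix.mul_nonsing_inv S hdet
  have hinvS : S⁻¹ * S = 1 := Matrix.nonsing_inv_mul S hdet
  have hune : ∀ i, u i ≠ 0 := by
    intro i h
    have := hu i i
    simp [h] at this
  have hφ1 : ∀ i, φ i * (u i ⬝ᵥ S⁻¹ *ᵥ u i) = 1 := by
    intro i
    rw [hφ i]
    refine inv_mul_cancel₀ ?_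
    have := hS.inv.dotProduct_mulVec_pos (hune i)
    simpa using this.ne'
  -- trace T = ∑ φ
  have htrT : Matrix.trace T = ∑ i, φ i := by
    rw [hT, Matrix.trace_sum]
    apply Finset.sum_congr rfl
    intro i _
    rw [Matrix.trace_smul]
    have : Matrix.trace (vecMulVec (u i) (u i)) = u i ⬝ᵥ u i := by
      simp [Matrix.trace, Matrix.diag, vecMulVec_apply, dotProduct]
    rw [this, hu i i]
    simp
  -- T * T
  have hTT : T * T = ∑ i, (φ i * φ i) • vecMulVec (u i) (u i) := by
    rw [hT, Finset.sum_mul]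
    apply Finset.sum_congr rfl
    intro i _
    rw [Finset.mul_sum]
    rw [Finset.sum_eq_single i]
    · rw [smul_mul_assoc, mul_smul_comm, aux_vmv_mul_vmv]
      simp [hu i i, smul_smul]
    · intro j _ hj
      rw [smul_mul_assoc, mul_smul_comm, aux_vmv_mul_vmv]
      simp [hu i j, Ne.symm hj]
    · intro h
      exact absurd (Finset.mem_univ i) h
  have htrTTA : Matrix.trace (T * T * S⁻¹) = ∑ i, φ i := by
    rw [hTT, Finset.sum_mul, Matrix.trace_sum]
    apply Finset.sum_congr rfl
    intro i _
    rw [smul_mul_assoc, Matrix.trace_smul, aux_trace_vmv_mul]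
    have := hφ1 i
    simp only [smul_eq_mul]
    calc φ i * φ i * (u i ⬝ᵥ S⁻¹ *ᵥ u i) = φ i * (φ i * (u i ⬝ᵥ S⁻¹ *ᵥ u i)) := by ring
    _ = φ i := by rw [this, mul_one]
  have expand : (T - S) * (T - S) * S⁻¹
      = T * T * S⁻¹ - T * (S * S⁻¹) - S * T * S⁻¹ + S * (S * S⁻¹) := by
    noncomm_ring
  rw [expand, hSinv, mul_one]
  have h3 : Matrix.trace (S * T * S⁻¹) = Matrix.trace T := by
    rw [Matrix.trace_mul_cycle, hinvS, one_mul]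
  simp only [Matrix.trace_add, Matrix.trace_sub, htrTTA, h3, htrT]
  ring
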